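/- For F = f + h with f μ-strongly convex and L-smooth and h convex, and any x, y ∈ ℝⁿ: F(y^+) + ⟨G_L(y), x − y⟩ + (μ/2)‖x − y‖² + (1/(2L))‖G_L(y)‖² ≤ F(x), where y^+ = y − (1/L)G_L(y) and G_L is the proximal gradient. -/

import Mathlib

open scoped InnerProductSpace

lemma aux_limit {A B C : ℝ} (hC : 0 ≤ C)
    (H : ∀ t : ℝ, 0 < t → t ≤ 1 → A ≤ B + t * C) : A ≤ B := by
  refine le_of_forall_pos_le_add fun ε hε => ?_
  have h1 : (0:ℝ) < ε / (C + 1) := by positivity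
  have h2 := H (min 1 (ε / (C + 1))) (lt_min one_pos h1) (min_le_left _ _)
  have h3 : min 1 (ε / (C + 1)) * C ≤ ε := by
    have : min 1 (ε / (C + 1)) * C ≤ ε / (C + 1) * C := by
      gcongr; exact min_le_right _ _
    have h4 : ε / (C + 1) * C ≤ ε := by
      rw [div_mul_eq_mul_div, div_le_iff₀ (by linarith)]
      nlinarith
    linarith
  linarith

theorem composite_lower_bound {n : ℕ}
    (f h : EuclideanSpace ℝ (Fin n) → ℝ)
    (g : EuclideanSpace ℝ (Fin n) → EuclideanSpace ℝ (Fin n))  -- gradient of f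
    (μ L : ℝ) (hμ : 0 < μ) (hL : 0 < L)
    (hsc : ∀ x y, f y + ⟪g y, x - y⟫_ℝ + μ / 2 * ‖x - y‖ ^ 2 ≤ f x)
    (hsm : ∀ x y, f x ≤ f y + ⟪g y, x - y⟫_ℝ + L / 2 * ‖x - y‖ ^ 2)
    (hconv : ConvexOn ℝ Set.univ h)
    (P : EuclideanSpace ℝ (Fin n) → EuclideanSpace ℝ (Fin n))  -- prox map
    (hP : ∀ y u, h (P y) + L / 2 * ‖(y - (1 / L) • g y) - P y‖ ^ 2
               ≤ h u + L / 2 * ‖(y - (1 / L) • g y) - u‖ ^ 2) :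
    ∀ x y, (f (y - (1 / L) • (L • (y - P y))) + h (y - (1 / L) • (L • (y - P y))))
        + ⟪L • (y - P y), x - y⟫_ℝ + μ / 2 * ‖x - y‖ ^ 2
        + 1 / (2 * L) * ‖L • (y - P y)‖ ^ 2 ≤ f x + h x := by
  intro x y
  have hLne : L ≠ 0 := ne_of_gt hL
  have hyp : y - (1 / L) • (L • (y - P y)) = P y := by
    rw [smul_smul, one_div_mul_cancel hLne, one_smul, sub_sub_cancel]
  rw [hyp]
  set p := P y with hp
  -- step 3: subgradient inequality for h
  have hsub : h p + (L * ⟪y - p, x - p⟫_ℝ - ⟪g y, x - p⟫_ℝ) ≤ h x := by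
    set v := y - (1 / L) • g y with hv
    have key : ∀ t : ℝ, 0 < t → t ≤ 1 →
        h p + (L * ⟪v - p, x - p⟫_ℝ) ≤ h x + t * (L / 2 * ‖x - p‖ ^ 2) := by
      intro t ht ht1
      have hu : p + t • (x - p) = (1 - t) • p + t • x := by
        module
      have hc : h (p + t • (x - p)) ≤ (1 - t) * h p + t * h x := by
        rw [hu]
        exact hconv.2 (Set.mem_univ _) (Set.mem_univ _) (by linarith) (le_of_lt ht) (by ring)
      have hpu := hP y (p + t • (x - p))
      rw [← hv] at hpu
      have hnorm : ‖v - (p + t • (x - p))‖ ^ 2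
          = ‖v - p‖ ^ 2 - 2 * t * ⟪v - p, x - p⟫_ℝ + t ^ 2 * ‖x - p‖ ^ 2 := by
        have : v - (p + t • (x - p)) = (v - p) - t • (x - p) := by abel
        rw [this, norm_sub_sq_real, real_inner_smul_right, norm_smul,
          Real.norm_eq_abs, mul_pow, sq_abs]
        ring
      rw [hnorm] at hpu
      -- hpu : h p + L/2‖v-p‖² ≤ h(u) + L/2 (‖v-p‖² - 2t⟪⟫ + t²‖x-p‖²)
      have ht' : h p * t + L * t * ⟪v - p, x - p⟫_ℝ ≤ h x * t + L / 2 * t ^ 2 * ‖x - p‖ ^ 2 := by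
        nlinarith [hpu, hc]
      exact le_of_mul_le_mul_right (by nlinarith [ht']) ht
    have hfin := aux_limit (by positivity) key
    have hvp : L * ⟪v - p, x - p⟫_ℝ = L * ⟪y - p, x - p⟫_ℝ - ⟪g y, x - p⟫_ℝ := by
      rw [hv]
      have : y - (1 / L) • g y - p = (y - p) - (1 / L) • g y := by abel
      rw [this, inner_sub_left, real_inner_smul_left]
      field_simp
    rw [hvp] at hfin
    linarith
  have h1 := hsm p y
  have h2 := hsc x y
  -- inner product algebra
  have e1 : ⟪y - p, x - p⟫_ℝ = ⟪y - p, x - y⟫_ℝ + ‖y - p‖ ^ 2 := by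
    have : x - p = (x - y) + (y - p) := by abel
    rw [this, inner_add_right, real_inner_self_eq_norm_sq]
  have e2 : ⟪g y, x - p⟫_ℝ = ⟪g y, x - y⟫_ℝ - ⟪g y, p - y⟫_ℝ := by
    have : x - p = (x - y) - (p - y) := by abel
    rw [this, inner_sub_right]
  have e3 : ⟪L • (y - p), x - y⟫_ℝ = L * ⟪y - p, x - y⟫_ℝ := real_inner_smul_left _ _ _
  have e4 : 1 / (2 * L) * ‖L • (y - p)‖ ^ 2 = L / 2 * ‖y - p‖ ^ 2 := by
    rw [norm_smul, Real.norm_eq_abs, mul_pow, sq_abs]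
    field_simp
  have e5 : ‖p - y‖ = ‖y - p‖ := norm_sub_rev _ _
  rw [e3, e4]
  rw [e1, e2] at hsub
  rw [e5] at h1
  linarith
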